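/- Let Z ⊆ ℙⁿ(ℂ) be a finite set satisfying the Cayley–Bacharach property CB(d). Then for every proper subset Z' ⊊ Z one has h¹_{Z'}(d) < h¹_Z(d). -/
import Mathlib
set_option synthInstance.maxHeartbeats 1000000
set_option maxHeartbeats 1000000


open MvPolynomial

noncomputable section

/-- Projective n-space over ℂ, viewed as classes of linear forms (vectors in ℂ^{n+1}). -/
abbrev Proj (n : ℕ) := Projectivization ℂ (Fin (n + 1) → ℂ)

instance (n : ℕ) : DecidableEq (Proj n) := Classical.decEq _

/-- The linear form with coefficient vector `v`. -/
def linForm (n : ℕ) (v : Fin (n + 1) → ℂ) : MvPolynomial (Fin (n + 1)) ℂ :=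
  ∑ i, MvPolynomial.C (v i) * MvPolynomial.X i

/-- The `d`-th Veronese image of a projective point: the `d`-th power of (a representative of)
the corresponding linear form. -/
def vero (n d : ℕ) (P : Proj n) : MvPolynomial (Fin (n + 1)) ℂ :=
  linForm n P.rep ^ d

/-- `A` computes `T` : the class of `T` lies in the projective linear span of `v_d(A)`,
equivalently `T` lies in the linear span of the `d`-th powers of the points of `A`. -/
def Computes (n d : ℕ) (A : Finset (Proj n)) (T : MvPolynomial (Fin (n + 1)) ℂ) : Prop :=
  T ∈ Submodule.span ℂ (vero n d '' (A : Set (Proj n)))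

/-- `A` is a non-redundant set computing `T`. -/
def NRComputes (n d : ℕ) (A : Finset (Proj n)) (T : MvPolynomial (Fin (n + 1)) ℂ) : Prop :=
  Computes n d A T ∧ ∀ A' ⊂ A, ¬ Computes n d A' T

/-- The (Waring) rank of `T` : minimal cardinality of a finite set computing `T`. -/
def waringRank (n d : ℕ) (T : MvPolynomial (Fin (n + 1)) ℂ) : ℕ :=
  sInf {r | ∃ A : Finset (Proj n), A.card = r ∧ Computes n d A T}

/-- `T` is identifiable: there is exactly one finite set computing `T` whose
cardinality equals the rank of `T`. -/
def Identifiable (n d : ℕ) (T : MvPolynomial (Fin (n + 1)) ℂ) : Prop :=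
  ∃! A : Finset (Proj n), A.card = waringRank n d T ∧ Computes n d A T

/-- The evaluation map of degree `j` on the chosen homogeneous coordinates of `Z`. -/
def evalMap (n j : ℕ) (Z : Finset (Proj n)) :
    MvPolynomial.homogeneousSubmodule (Fin (n + 1)) ℂ j →ₗ[ℂ] (Z → ℂ) where
  toFun F := fun P => MvPolynomial.eval (P.1).rep F.1
  map_add' F G := by funext P; simp
  map_smul' c F := by funext P; simp

/-- The Hilbert function of the finite set `Z` (at a natural number `j`). -/
def hilbN (n : ℕ) (Z : Finset (Proj n)) (j : ℕ) : ℕ :=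
  Module.finrank ℂ (LinearMap.range (evalMap n j Z))

/-- The Hilbert function of the finite set `Z` (zero in negative degrees). -/
def hilb (n : ℕ) (Z : Finset (Proj n)) (j : ℤ) : ℕ :=
  if j < 0 then 0 else hilbN n Z j.toNat

/-- The first difference of the Hilbert function. -/
def Dhilb (n : ℕ) (Z : Finset (Proj n)) (j : ℤ) : ℤ :=
  (hilb n Z j : ℤ) - (hilb n Z (j - 1) : ℤ)

/-- The `d`-th Kruskal rank of `A` : the largest `k` such that every subset of `A`
with at most `k` elements has linearly independent image under `v_d`. -/
def kruskalRank (n d : ℕ) (A : Finset (Proj n)) : ℕ :=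
  sSup {k | k ≤ A.card ∧
    ∀ A' ⊆ A, A'.card ≤ k → LinearIndependent ℂ (fun P : A' => vero n d P.1)}

/-- The Cayley–Bacharach property in degree `d` for the finite set `Z`. -/
def CB (n d : ℕ) (Z : Finset (Proj n)) : Prop :=
  ∀ P ∈ Z, ∀ F : MvPolynomial (Fin (n + 1)) ℂ, F.IsHomogeneous d →
    (∀ Q ∈ Z, Q ≠ P → MvPolynomial.eval Q.rep F = 0) → MvPolynomial.eval P.rep F = 0

end

lemma mono_aux (n d : ℕ) (Z' W : Finset (Proj n)) (h : Z' ⊆ W) :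
    (Z'.card : ℤ) - (hilbN n Z' d : ℤ) ≤ (W.card : ℤ) - (hilbN n W d : ℤ) := by
  classical
  set f := evalMap n d W
  set g := evalMap n d Z'
  let ι : ↥Z' → ↥W := fun q => ⟨q.1, h q.2⟩
  have hι : Function.Injective ι := fun a b hab => by
    have h0 : (ι a).1 = (ι b).1 := congrArg Subtype.val hab
    exact Subtype.ext h0
  let π : (↥W → ℂ) →ₗ[ℂ] (↥Z' → ℂ) :=
    LinearMap.funLeft ℂ ℂ ι
  have hπsurj : Function.Surjective π := LinearMap.funLeft_surjective_of_injective ℂ ℂ ι hι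
  have hcomp : π.comp f = g := by
    ext F q
    rfl
  set S := LinearMap.range f with hS
  let πS : S →ₗ[ℂ] (↥Z' → ℂ) := π.comp S.subtype
  have hrange : LinearMap.range πS = LinearMap.range g := by
    rw [← hcomp]
    rw [LinearMap.range_comp, LinearMap.range_comp, Submodule.range_subtype]
  haveI : FiniteDimensional ℂ S := inferInstance
  have hWdef : hilbN n W d = Module.finrank ℂ S := rfl
  have e1 : Module.finrank ℂ S = hilbN n Z' d + Module.finrank ℂ (LinearMap.ker πS) := by
    have h5 := LinearMap.finrank_range_add_finrank_ker πS
    rw [hrange] at h5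
    have h6 : hilbN n Z' d = Module.finrank ℂ (LinearMap.range g) := rfl
    omega
  have e2 : Module.finrank ℂ (LinearMap.ker πS) ≤ Module.finrank ℂ (LinearMap.ker π) := by
    have hmap : (LinearMap.ker πS).map S.subtype ≤ LinearMap.ker π := by
      rintro x ⟨y, hy, rfl⟩
      exact hy
    calc Module.finrank ℂ (LinearMap.ker πS)
        = Module.finrank ℂ ((LinearMap.ker πS).map S.subtype) :=
          LinearEquiv.finrank_eq (Submodule.equivMapOfInjective S.subtype
            (Submodule.injective_subtype S) _)
      _ ≤ Module.finrank ℂ (LinearMap.ker π) := Submodule.finrank_mono hmap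
  have e3 : W.card = Z'.card + Module.finrank ℂ (LinearMap.ker π) := by
    have := LinearMap.finrank_range_add_finrank_ker π
    rw [LinearMap.range_eq_top.mpr hπsurj] at this
    simp only [finrank_top] at this
    rw [Module.finrank_pi, Module.finrank_pi] at this
    simpa [Fintype.card_coe] using this.symm
  omega

lemma erase_eq (n d : ℕ) (Z : Finset (Proj n)) (hCB : CB n d Z) (P : Proj n) (hP : P ∈ Z) :
    hilbN n (Z.erase P) d = hilbN n Z d := by
  classical
  have hker : LinearMap.ker (evalMap n d Z) = LinearMap.ker (evalMap n d (Z.erase P)) := by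
    ext F
    simp only [LinearMap.mem_ker]
    constructor
    · intro hF
      funext q
      have := congrFun hF ⟨q.1, Finset.mem_of_mem_erase q.2⟩
      exact this
    · intro hF
      funext q
      by_cases hq : q.1 = P
      · have hhom : F.1.IsHomogeneous d := F.2
        have := hCB P hP F.1 hhom ?_
        · simpa [evalMap, hq] using this
        · intro Q hQ hQP
          have hQe : Q ∈ Z.erase P := Finset.mem_erase.mpr ⟨hQP, hQ⟩
          exact congrFun hF ⟨Q, hQe⟩
      · exact congrFun hF ⟨q.1, Finset.mem_erase.mpr ⟨hq, q.2⟩⟩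
  unfold hilbN
  exact LinearEquiv.finrank_eq
    ((evalMap n d (Z.erase P)).quotKerEquivRange.symm.trans
      ((Submodule.quotEquivOfEq _ _ hker.symm).trans (evalMap n d Z).quotKerEquivRange))

/-- Proposition: if `Z` satisfies `CB(d)`, then every proper subset `Z' ⊊ Z`
has `h¹_{Z'}(d) < h¹_Z(d)`. -/
theorem stmt6 (n d : ℕ) (Z : Finset (Proj n)) (hCB : CB n d Z)
    (Z' : Finset (Proj n)) (hZ' : Z' ⊂ Z) :
    ((Z'.card : ℤ) - (hilbN n Z' d : ℤ)) < ((Z.card : ℤ) - (hilbN n Z d : ℤ)) := by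
  classical
  obtain ⟨P, hPZ, hPZ'⟩ := Finset.exists_of_ssubset hZ'
  have hsub : Z' ⊆ Z.erase P := fun x hx =>
    Finset.mem_erase.mpr ⟨fun h => hPZ' (h ▸ hx), hZ'.1 hx⟩
  have h1 := mono_aux n d Z' (Z.erase P) hsub
  have h2 := erase_eq n d Z hCB P hPZ
  have h3 : (Z.erase P).card = Z.card - 1 := Finset.card_erase_of_mem hPZ
  have h4 : 1 ≤ Z.card := Finset.card_pos.mpr ⟨P, hPZ⟩
  omega
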